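/- Let (a_i), (b_j), (c_k) ∈ {0,1}^ℤ be bi-infinite words and suppose that |(H_a(i') − H_a(i)) + (H_b(j') − H_b(j)) + (H_c(k') − H_c(k))| ≤ 1 holds for all (i,j,k), (i',j',k') ∈ ℤ³ with i + j + k = i' + j' + k' = 0. Then for every real κ ≥ 1 there exist t_a, t_b, t_c ∈ ℝ such that the sequences a(i) := iκ + H_a(i) + t_a, b(j) := jκ + H_b(j) + t_b, c(k) := kκ + H_c(k) + t_c satisfy |a(i) + b(j) + c(k)| = 1/2 for all (i,j,k) ∈ ℤ³ with i + j + k = 0 (and hence form a Sturmian lattice whose widths are a(i+1) − a(i) = κ + a_i, etc.). -/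

import Mathlib

/-- The signed height function of a bi-infinite word `w : ℤ → ℤ`:
`H_w(i) = Σ_{0 ≤ m < i} w m` for `i ≥ 0` and `H_w(i) = −Σ_{i ≤ m < 0} w m` for `i < 0`. -/
noncomputable def sheight (w : ℤ → ℤ) (i : ℤ) : ℤ :=
  if 0 ≤ i then ∑ m ∈ Finset.Ico (0 : ℤ) i, w m else -∑ m ∈ Finset.Ico i (0 : ℤ), w m

theorem stmt5 (wa wb wc : ℤ → ℤ)
    (hwa : ∀ n : ℤ, wa n = 0 ∨ wa n = 1)
    (hwb : ∀ n : ℤ, wb n = 0 ∨ wb n = 1)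
    (hwc : ∀ n : ℤ, wc n = 0 ∨ wc n = 1)
    (hbal : ∀ i j k i' j' k' : ℤ, i + j + k = 0 → i' + j' + k' = 0 →
      |(sheight wa i' - sheight wa i) + (sheight wb j' - sheight wb j) +
        (sheight wc k' - sheight wc k)| ≤ 1) :
    ∀ κ : ℝ, 1 ≤ κ → ∃ ta tb tc : ℝ, ∀ i j k : ℤ, i + j + k = 0 →
      |((i : ℝ) * κ + (sheight wa i : ℝ) + ta) +
        ((j : ℝ) * κ + (sheight wb j : ℝ) + tb) +
        ((k : ℝ) * κ + (sheight wc k : ℝ) + tc)| = 1 / 2 := by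
  intro κ hκ
  set S : ℤ → ℤ → ℤ → ℤ := fun i j k => sheight wa i + sheight wb j + sheight wc k with hSdef
  have h0 : ∀ w : ℤ → ℤ, sheight w 0 = 0 := by intro w; simp [sheight]
  have hS1 : ∀ i j k : ℤ, i + j + k = 0 → |S i j k| ≤ 1 := by
    intro i j k h
    have := hbal 0 0 0 i j k (by ring) h
    simpa [h0, hSdef, add_sub_assoc] using this
  by_cases hex : ∃ i j k : ℤ, i + j + k = 0 ∧ S i j k = 1
  · obtain ⟨i', j', k', hsum', hval'⟩ := hex
    refine ⟨-(1/2), 0, 0, ?_⟩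
    intro i j k hsum
    have hκ0 : (i : ℝ) + (j : ℝ) + (k : ℝ) = 0 := by exact_mod_cast congrArg (Int.cast : ℤ → ℝ) hsum
    have hle := hS1 i j k hsum
    have hge := hbal i' j' k' i j k hsum' hsum
    have hS01 : S i j k = 0 ∨ S i j k = 1 := by
      simp only [hSdef] at *
      rw [abs_le] at hle hge
      omega
    have hEq : ((i : ℝ) * κ + (sheight wa i : ℝ) + -(1/2)) +
        ((j : ℝ) * κ + (sheight wb j : ℝ) + 0) +
        ((k : ℝ) * κ + (sheight wc k : ℝ) + 0) = (S i j k : ℝ) - 1/2 := by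
      simp only [hSdef]
      push_cast
      linear_combination hκ0 * κ
    rw [hEq]
    rcases hS01 with h | h <;> rw [h] <;> norm_num
  · refine ⟨1/2, 0, 0, ?_⟩
    intro i j k hsum
    have hκ0 : (i : ℝ) + (j : ℝ) + (k : ℝ) = 0 := by exact_mod_cast congrArg (Int.cast : ℤ → ℝ) hsum
    have hle := hS1 i j k hsum
    push_neg at hex
    have hne := hex i j k hsum
    have hS01 : S i j k = 0 ∨ S i j k = -1 := by
      rw [abs_le] at hle
      omega
    have hEq : ((i : ℝ) * κ + (sheight wa i : ℝ) + 1/2) +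
        ((j : ℝ) * κ + (sheight wb j : ℝ) + 0) +
        ((k : ℝ) * κ + (sheight wc k : ℝ) + 0) = (S i j k : ℝ) + 1/2 := by
      simp only [hSdef]
      push_cast
      linear_combination hκ0 * κ
    rw [hEq]
    rcases hS01 with h | h <;> rw [h] <;> norm_num
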